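/- Let Ω ⊂ ℝⁿ be a convex open set, let u : Ω → ℝ be twice differentiable, and suppose the concavity function C_u attains a local maximum at an interior point (x₁, x₃, λ) ∈ Ω × Ω × (0,1), with x₂ := λx₃ + (1−λ)x₁ ∈ Ω. Let A = (a^{ij}) be any symmetric positive semidefinite n×n real matrix, and set α := (1−λ)² T(x₂) − (1−λ) T(x₁), γ := λ² T(x₂) − λ T(x₃), and β := λ(1−λ) T(x₂), where T(x) := ∑_{i,j=1}^n a^{ij} D²_{ij}u(x). Then for all s, t ∈ ℝ one has α s² + 2β s t + γ t² ≤ 0; in particular α ≤ 0, γ ≤ 0, and β² ≤ αγ. -/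

import Mathlib

open Set

/-- The second partial derivative `D²_{ij} u (x)`. -/
noncomputable def secondPartial {n : ℕ} (u : EuclideanSpace ℝ (Fin n) → ℝ)
    (x : EuclideanSpace ℝ (Fin n)) (i j : Fin n) : ℝ :=
  fderiv ℝ (fun y => fderiv ℝ u y (EuclideanSpace.single j 1)) x (EuclideanSpace.single i 1)

section Aux
open Filter Topology

/-- Second derivative test for a local max at 0. -/
lemma secondDeriv_nonpos_of_isLocalMax {f f' : ℝ → ℝ} {L : ℝ}
    (hf : ∀ᶠ τ in 𝓝 (0:ℝ), HasDerivAt f (f' τ) τ)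
    (hf' : HasDerivAt f' L 0)
    (hmax : IsLocalMax f 0) : L ≤ 0 := by
  by_contra hL
  push_neg at hL
  have hf'0 : f' 0 = 0 := hmax.hasDerivAt_eq_zero hf.self_of_nhds
  have hslope := hasDerivAt_iff_tendsto_slope.1 hf'
  have hpos : ∀ᶠ τ in 𝓝[≠] (0:ℝ), 0 < slope f' 0 τ :=
    hslope.eventually (eventually_gt_nhds hL)
  rw [eventually_nhdsWithin_iff] at hpos
  obtain ⟨ε₁, hε₁, h₁⟩ := Metric.eventually_nhds_iff.1 hpos
  obtain ⟨ε₂, hε₂, h₂⟩ := Metric.eventually_nhds_iff.1 ((hf.and hmax).and (eventually_mem_nhds_iff.2 hf.eventually_nhds))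
  set δ := min ε₁ ε₂ / 2 with hδdef
  have hδ : 0 < δ := by positivity
  have hδ₁ : δ < ε₁ := by
    simp only [hδdef]
    have := min_le_left ε₁ ε₂; linarith
  have hδ₂ : δ < ε₂ := by
    simp only [hδdef]
    have := min_le_right ε₁ ε₂; linarith
  have hdist : ∀ x : ℝ, x ∈ Icc (0:ℝ) δ → dist x 0 < ε₂ := by
    intro x hx
    rw [Real.dist_eq, sub_zero, abs_of_nonneg hx.1]
    linarith [hx.2]
  have hcont : ContinuousOn f (Icc 0 δ) := fun x hx =>
    ((h₂ (hdist x hx)).1.1).continuousAt.continuousWithinAt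
  have hderiv : ∀ x ∈ Ioo (0:ℝ) δ, HasDerivAt f (f' x) x := fun x hx =>
    (h₂ (hdist x ⟨hx.1.le, hx.2.le⟩)).1.1
  obtain ⟨c, hc, hceq⟩ := exists_hasDerivAt_eq_slope f f' hδ hcont hderiv
  have hfle : f δ ≤ f 0 := (h₂ (hdist δ ⟨hδ.le, le_refl _⟩)).1.2
  have hcle : f' c ≤ 0 := by
    rw [hceq]
    apply div_nonpos_of_nonpos_of_nonneg <;> linarith
  have hcpos : 0 < f' c := by
    have hd : dist c 0 < ε₁ := by
      rw [Real.dist_eq, sub_zero, abs_of_pos hc.1]; linarith [hc.2]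
    have := h₁ hd (by simp [ne_of_gt hc.1] : c ∈ ({0}ᶜ : Set ℝ))
    rw [slope_def_field, hf'0, sub_zero, sub_zero] at this
    rcases div_pos_iff.mp this with ⟨h, _⟩ | ⟨_, h⟩
    · exact h
    · exact absurd hc.1 (not_lt.2 h.le)
  linarith


section helpers
variable {n : ℕ} {Ω : Set (EuclideanSpace ℝ (Fin n))} (hΩo : IsOpen Ω)
  {u : EuclideanSpace ℝ (Fin n) → ℝ}
  (hu : DifferentiableOn ℝ u Ω) (hu2 : DifferentiableOn ℝ (fderiv ℝ u) Ω)

include hΩo hu in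
lemma lineD (x d : EuclideanSpace ℝ (Fin n)) (τ : ℝ) (hmem : x + τ • d ∈ Ω) :
    HasDerivAt (fun τ' => u (x + τ' • d)) (fderiv ℝ u (x + τ • d) d) τ := by
  have hline : HasDerivAt (fun τ' : ℝ => x + τ' • d) d τ := by
    simpa using ((hasDerivAt_id τ).smul_const d).const_add x
  exact ((hu.differentiableAt (hΩo.mem_nhds hmem)).hasFDerivAt).comp_hasDerivAt τ hline

include hΩo hu2 in
lemma lineD2 (x d : EuclideanSpace ℝ (Fin n)) (τ : ℝ) (hmem : x + τ • d ∈ Ω) :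
    HasDerivAt (fun τ' => fderiv ℝ u (x + τ' • d) d)
      (fderiv ℝ (fderiv ℝ u) (x + τ • d) d d) τ := by
  have hline : HasDerivAt (fun τ' : ℝ => x + τ' • d) d τ := by
    simpa using ((hasDerivAt_id τ).smul_const d).const_add x
  have h1 : HasFDerivAt (fun y => fderiv ℝ u y d)
      ((ContinuousLinearMap.apply ℝ ℝ d).comp (fderiv ℝ (fderiv ℝ u) (x + τ • d)))
      (x + τ • d) :=
    (ContinuousLinearMap.apply ℝ ℝ d).hasFDerivAt.comp _
      ((hu2.differentiableAt (hΩo.mem_nhds hmem)).hasFDerivAt)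
  exact h1.comp_hasDerivAt τ hline

include hΩo hu2 in
lemma secondPartial_eq (x : EuclideanSpace ℝ (Fin n)) (hx : x ∈ Ω) (i j : Fin n) :
    secondPartial u x i j
      = fderiv ℝ (fderiv ℝ u) x (EuclideanSpace.single i 1) (EuclideanSpace.single j 1) := by
  have h1 : HasFDerivAt (fun y => fderiv ℝ u y (EuclideanSpace.single j 1))
      ((ContinuousLinearMap.apply ℝ ℝ (EuclideanSpace.single j 1)).comp
        (fderiv ℝ (fderiv ℝ u) x)) x :=
    by simpa [Function.comp_def] using
      (ContinuousLinearMap.apply ℝ ℝ (EuclideanSpace.single j 1)).hasFDerivAt.comp x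
        ((hu2.differentiableAt (hΩo.mem_nhds hx)).hasFDerivAt)
  rw [secondPartial, h1.fderiv]
  rfl

lemma euclid_decomp (w : EuclideanSpace ℝ (Fin n)) :
    w = ∑ i, w i • EuclideanSpace.single i 1 := by
  have := ((EuclideanSpace.basisFun (Fin n) ℝ).sum_repr w).symm
  simpa [EuclideanSpace.basisFun_apply, EuclideanSpace.basisFun_repr] using this

include hΩo hu2 in
lemma hessian_expand (x : EuclideanSpace ℝ (Fin n)) (hx : x ∈ Ω)
    (w : EuclideanSpace ℝ (Fin n)) :
    fderiv ℝ (fderiv ℝ u) x w w = ∑ i, ∑ j, w i * w j * secondPartial u x i j := by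
  conv_lhs => rw [euclid_decomp w]
  simp only [map_sum, map_smul, ContinuousLinearMap.sum_apply,
    ContinuousLinearMap.smul_apply, smul_eq_mul, Finset.mul_sum]
  rw [Finset.sum_comm]
  refine Finset.sum_congr rfl fun i _ => Finset.sum_congr rfl fun j _ => ?_
  rw [secondPartial_eq hΩo hu2 x hx i j]
  ring

end helpers

section key
variable {n : ℕ} {Ω : Set (EuclideanSpace ℝ (Fin n))} (hΩo : IsOpen Ω)
  {u : EuclideanSpace ℝ (Fin n) → ℝ}
  (hu : DifferentiableOn ℝ u Ω) (hu2 : DifferentiableOn ℝ (fderiv ℝ u) Ω)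

include hΩo hu hu2 in
lemma key_dir {x₁ x₃ : EuclideanSpace ℝ (Fin n)} {lam : ℝ}
    (hx₁ : x₁ ∈ Ω) (hx₃ : x₃ ∈ Ω)
    (hx₂ : lam • x₃ + (1 - lam) • x₁ ∈ Ω)
    (hmax : IsLocalMax
      (fun p : EuclideanSpace ℝ (Fin n) × EuclideanSpace ℝ (Fin n) × ℝ =>
        u (p.2.2 • p.2.1 + (1 - p.2.2) • p.1) - p.2.2 * u p.2.1 - (1 - p.2.2) * u p.1)
      (x₁, x₃, lam))
    (v : EuclideanSpace ℝ (Fin n)) (s t : ℝ) :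
    (lam * t + (1 - lam) * s) ^ 2
        * fderiv ℝ (fderiv ℝ u) (lam • x₃ + (1 - lam) • x₁) v v
      - (1 - lam) * s ^ 2 * fderiv ℝ (fderiv ℝ u) x₁ v v
      - lam * t ^ 2 * fderiv ℝ (fderiv ℝ u) x₃ v v ≤ 0 := by
  set x₂ : EuclideanSpace ℝ (Fin n) := lam • x₃ + (1 - lam) • x₁ with hx₂def
  set c : ℝ := lam * t + (1 - lam) * s with hcdef
  set p₁ : ℝ → EuclideanSpace ℝ (Fin n) := fun τ => x₁ + τ • (s • v) with hp₁def
  set p₃ : ℝ → EuclideanSpace ℝ (Fin n) := fun τ => x₃ + τ • (t • v) with hp₃def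
  set p₂ : ℝ → EuclideanSpace ℝ (Fin n) := fun τ => x₂ + τ • (c • v) with hp₂def
  have hp₂ : ∀ τ : ℝ, p₂ τ = lam • p₃ τ + (1 - lam) • p₁ τ := by
    intro τ
    simp only [hp₁def, hp₂def, hp₃def, hx₂def, hcdef]
    module
  set f : ℝ → ℝ := fun τ => u (p₂ τ) - lam * u (p₃ τ) - (1 - lam) * u (p₁ τ) with hfdef
  set f' : ℝ → ℝ := fun τ =>
    fderiv ℝ u (p₂ τ) (c • v) - lam * fderiv ℝ u (p₃ τ) (t • v)
      - (1 - lam) * fderiv ℝ u (p₁ τ) (s • v) with hf'def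
  have hmem : ∀ᶠ τ in 𝓝 (0 : ℝ), p₁ τ ∈ Ω ∧ p₂ τ ∈ Ω ∧ p₃ τ ∈ Ω := by
    have c₁ : ContinuousAt p₁ 0 := by fun_prop
    have c₂ : ContinuousAt p₂ 0 := by fun_prop
    have c₃ : ContinuousAt p₃ 0 := by fun_prop
    have m₁ : ∀ᶠ τ in 𝓝 (0 : ℝ), p₁ τ ∈ Ω :=
      c₁.eventually_mem (hΩo.mem_nhds (by simp [hp₁def, hx₁]))
    have m₂ : ∀ᶠ τ in 𝓝 (0 : ℝ), p₂ τ ∈ Ω :=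
      c₂.eventually_mem (hΩo.mem_nhds (by simp [hp₂def, hx₂]))
    have m₃ : ∀ᶠ τ in 𝓝 (0 : ℝ), p₃ τ ∈ Ω :=
      c₃.eventually_mem (hΩo.mem_nhds (by simp [hp₃def, hx₃]))
    exact m₁.and (m₂.and m₃)
  have hfd : ∀ᶠ τ in 𝓝 (0 : ℝ), HasDerivAt f (f' τ) τ := by
    refine hmem.mono fun τ ⟨h1, h2, h3⟩ => ?_
    exact ((lineD hΩo hu x₂ (c • v) τ h2).sub
      ((lineD hΩo hu x₃ (t • v) τ h3).const_mul lam)).sub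
      ((lineD hΩo hu x₁ (s • v) τ h1).const_mul (1 - lam))
  have hd₂ : HasDerivAt (fun τ : ℝ => fderiv ℝ u (p₂ τ) (c • v))
      (fderiv ℝ (fderiv ℝ u) x₂ (c • v) (c • v)) 0 := by
    simpa using lineD2 hΩo hu2 x₂ (c • v) 0 (by simpa using hx₂)
  have hd₃ : HasDerivAt (fun τ : ℝ => fderiv ℝ u (p₃ τ) (t • v))
      (fderiv ℝ (fderiv ℝ u) x₃ (t • v) (t • v)) 0 := by
    simpa using lineD2 hΩo hu2 x₃ (t • v) 0 (by simpa using hx₃)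
  have hd₁ : HasDerivAt (fun τ : ℝ => fderiv ℝ u (p₁ τ) (s • v))
      (fderiv ℝ (fderiv ℝ u) x₁ (s • v) (s • v)) 0 := by
    simpa using lineD2 hΩo hu2 x₁ (s • v) 0 (by simpa using hx₁)
  have hf'd : HasDerivAt f'
      (fderiv ℝ (fderiv ℝ u) x₂ (c • v) (c • v)
        - lam * fderiv ℝ (fderiv ℝ u) x₃ (t • v) (t • v)
        - (1 - lam) * fderiv ℝ (fderiv ℝ u) x₁ (s • v) (s • v)) 0 :=
    (hd₂.sub (hd₃.const_mul lam)).sub (hd₁.const_mul (1 - lam))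
  have hcg : Tendsto (fun τ : ℝ => (p₁ τ, p₃ τ, lam)) (𝓝 0) (𝓝 (x₁, x₃, lam)) := by
    have hct : ContinuousAt (fun τ : ℝ => (p₁ τ, p₃ τ, lam)) 0 := by fun_prop
    have h0 : (p₁ 0, p₃ 0, lam) = (x₁, x₃, lam) := by simp [hp₁def, hp₃def]
    simpa [ContinuousAt, h0] using hct
  have hlm : IsLocalMax f 0 := by
    have hev := hcg.eventually hmax
    refine hev.mono fun τ hτ => ?_
    have e1 : f τ = u (lam • p₃ τ + (1 - lam) • p₁ τ) - lam * u (p₃ τ)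
        - (1 - lam) * u (p₁ τ) := by rw [hfdef]; simp only; rw [hp₂ τ]
    have e2 : f 0 = u (lam • x₃ + (1 - lam) • x₁) - lam * u x₃ - (1 - lam) * u x₁ := by
      rw [hfdef]; simp [hp₁def, hp₂def, hp₃def, hx₂def]
    rw [e1, e2]
    simpa using hτ
  have hL := secondDeriv_nonpos_of_isLocalMax hfd hf'd hlm
  have hsmul : ∀ (z : EuclideanSpace ℝ (Fin n)) (a : ℝ),
      fderiv ℝ (fderiv ℝ u) z (a • v) (a • v) = a ^ 2 * fderiv ℝ (fderiv ℝ u) z v v := by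
    intro z a
    simp only [map_smul, ContinuousLinearMap.smul_apply, smul_eq_mul]
    ring
  rw [hsmul, hsmul, hsmul] at hL
  linarith

end key

end Aux

/-- If the concavity function of a twice differentiable `u` on a convex
open set `Ω` attains a local maximum at an interior point `(x₁,x₃,λ) ∈ Ω × Ω × (0,1)`
(with `x₂ := λx₃+(1−λ)x₁ ∈ Ω`), `A` is any symmetric positive semidefinite matrix,
and `T(x) := ∑ᵢⱼ aᶦʲ D²ᵢⱼu(x)`, then with
`α := (1−λ)² T(x₂) − (1−λ) T(x₁)`, `γ := λ² T(x₂) − λ T(x₃)`, `β := λ(1−λ) T(x₂)`,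
one has `α s² + 2β s t + γ t² ≤ 0` for all `s, t`; in particular `α ≤ 0`, `γ ≤ 0`
and `β² ≤ αγ`. -/
theorem stmt2 {n : ℕ} (Ω : Set (EuclideanSpace ℝ (Fin n)))
    (hΩo : IsOpen Ω) (hΩc : Convex ℝ Ω)
    (u : EuclideanSpace ℝ (Fin n) → ℝ)
    (hu : DifferentiableOn ℝ u Ω) (hu2 : DifferentiableOn ℝ (fderiv ℝ u) Ω)
    (x₁ x₃ : EuclideanSpace ℝ (Fin n)) (lam : ℝ)
    (hx₁ : x₁ ∈ Ω) (hx₃ : x₃ ∈ Ω) (hlam : lam ∈ Ioo (0 : ℝ) 1)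
    (hx₂ : lam • x₃ + (1 - lam) • x₁ ∈ Ω)
    (hmax : IsLocalMax
      (fun p : EuclideanSpace ℝ (Fin n) × EuclideanSpace ℝ (Fin n) × ℝ =>
        u (p.2.2 • p.2.1 + (1 - p.2.2) • p.1) - p.2.2 * u p.2.1 - (1 - p.2.2) * u p.1)
      (x₁, x₃, lam))
    (A : Matrix (Fin n) (Fin n) ℝ) (hA : A.PosSemidef)
    (T : EuclideanSpace ℝ (Fin n) → ℝ)
    (hT : ∀ x, T x = ∑ i, ∑ j, A i j * secondPartial u x i j)
    (α β γ : ℝ)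
    (hα : α = (1 - lam) ^ 2 * T (lam • x₃ + (1 - lam) • x₁) - (1 - lam) * T x₁)
    (hγ : γ = lam ^ 2 * T (lam • x₃ + (1 - lam) • x₁) - lam * T x₃)
    (hβ : β = lam * (1 - lam) * T (lam • x₃ + (1 - lam) • x₁)) :
    (∀ s t : ℝ, α * s ^ 2 + 2 * β * s * t + γ * t ^ 2 ≤ 0) ∧
      α ≤ 0 ∧ γ ≤ 0 ∧ β ^ 2 ≤ α * γ := by
  obtain ⟨B, hB⟩ : ∃ B : Matrix (Fin n) (Fin n) ℝ, A = B.conjTranspose * B := by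
    open scoped MatrixOrder in
    obtain ⟨B, hB⟩ := CStarAlgebra.nonneg_iff_eq_star_mul_self.mp hA.nonneg
    exact ⟨B, hB⟩
  set w : Fin n → EuclideanSpace ℝ (Fin n) :=
    fun k => (WithLp.equiv 2 (Fin n → ℝ)).symm (B k) with hwdef
  have hAij : ∀ i j, A i j = ∑ k, B k i * B k j := by
    intro i j
    rw [hB]
    simp [Matrix.mul_apply, Matrix.conjTranspose_apply]
  have hTw : ∀ z, z ∈ Ω → T z = ∑ k, fderiv ℝ (fderiv ℝ u) z (w k) (w k) := by
    intro z hz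
    rw [hT]
    have h1 : ∀ k, fderiv ℝ (fderiv ℝ u) z (w k) (w k)
        = ∑ i, ∑ j, B k i * B k j * secondPartial u z i j := by
      intro k
      rw [hessian_expand hΩo hu2 z hz]
      rfl
    simp_rw [h1, hAij, Finset.sum_mul]
    refine Eq.trans (Finset.sum_congr rfl fun i _ => Finset.sum_comm) ?_
    exact Finset.sum_comm
  have main : ∀ s t : ℝ, α * s ^ 2 + 2 * β * s * t + γ * t ^ 2 ≤ 0 := by
    intro s t
    have hsum : α * s ^ 2 + 2 * β * s * t + γ * t ^ 2
        = ∑ k, ((lam * t + (1 - lam) * s) ^ 2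
            * fderiv ℝ (fderiv ℝ u) (lam • x₃ + (1 - lam) • x₁) (w k) (w k)
          - (1 - lam) * s ^ 2 * fderiv ℝ (fderiv ℝ u) x₁ (w k) (w k)
          - lam * t ^ 2 * fderiv ℝ (fderiv ℝ u) x₃ (w k) (w k)) := by
      rw [hα, hβ, hγ, hTw _ hx₂, hTw _ hx₁, hTw _ hx₃]
      rw [Finset.sum_sub_distrib, Finset.sum_sub_distrib,
        ← Finset.mul_sum, ← Finset.mul_sum, ← Finset.mul_sum]
      ring
    rw [hsum]
    exact Finset.sum_nonpos fun k _ => key_dir hΩo hu hu2 hx₁ hx₃ hx₂ hmax (w k) s t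
  refine ⟨main, ?_, ?_, ?_⟩
  · simpa using main 1 0
  · simpa using main 0 1
  · have hd := discrim_le_zero_of_nonpos (a := α) (b := 2 * β) (c := γ)
      fun x => by nlinarith [main x 1]
    rw [discrim] at hd
    nlinarith [hd]
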